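/- (Null space of the augmented grounded Laplacian under the design.) Let A_{ij} be a signed matrix-weight assignment on N vertices satisfying Assumption 1 with partition V1 ∪ V2, and suppose Σ_{j∈Ω_i}|A_{ij}| is positive definite for every i ∈ V1, where Ω_i = {j : A_{ij} is negative semidefinite and nonzero}. Choose δ > max(0, max_{i∈V1} (1/2) λ_max[ (Σ_{j∈Ω_i}|A_{ij}|)⁻¹ ( Σ_{j∈N'_i}|A_{ji}| − Σ_{j∈N_i}|A_{ij}| ) ]) and apply the design: δ_i = δ for i with Ω_i ≠ ∅ and δ_i = 0 otherwise; B_i = Σ_{j∈Ω_i}|A_{ij}| for such i and B_i = 0 otherwise. Let L_B = L + blockdiag(δ_1 B_1,…,δ_N B_N) and let Δ_B ∈ ℝ^{Nd×d} be the block column stacking δ_1 B_1,…,δ_N B_N. Then the set {(u, w) ∈ ℝ^{Nd} × ℝ^d : L_B u = Δ_B w} (the null space of the augmented Laplacian L̂ with blocks [[L_B, −Δ_B],[0, 0]]) equals { (1_N ⊗ θ', (1 + 2/δ) θ') : θ' ∈ ℝ^d }; in particular it is a d-dimensional subspace of ℝ^{Nd+d}. -/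

import Mathlib

open Matrix Filter
open scoped Classical

/-- `|Q|` for a real symmetric matrix that is positive semidefinite or negative
semidefinite: it equals `Q` in the first case and `-Q` in the second. -/
noncomputable def absM {d : ℕ} (Q : Matrix (Fin d) (Fin d) ℝ) : Matrix (Fin d) (Fin d) ℝ :=
  if Q.PosSemidef then Q else -Q

/-- A signed matrix-weight assignment: for `i ≠ j`, each weight `A i j` is symmetric
and either positive semidefinite or negative semidefinite. -/
def SignedWeights {N d : ℕ} (A : Fin N → Fin N → Matrix (Fin d) (Fin d) ℝ) : Prop :=
  ∀ i j : Fin N, i ≠ j → (A i j).IsSymm ∧ ((A i j).PosSemidef ∨ (-(A i j)).PosSemidef)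

/-- The signed matrix-weighted Laplacian: `(i,j)` block `−A_{ij}` for `j ≠ i`, and
`(i,i)` block `Σ_{k≠i}|A_{ik}|`. -/
noncomputable def Lap {N d : ℕ} (A : Fin N → Fin N → Matrix (Fin d) (Fin d) ℝ) :
    Matrix (Fin N × Fin d) (Fin N × Fin d) ℝ :=
  fun p q =>
    if p.1 = q.1 then (∑ k ∈ Finset.univ.erase p.1, absM (A p.1 k)) p.2 q.2
    else (-(A p.1 q.1)) p.2 q.2

/-- The block-diagonal `Nd × Nd` matrix with `d × d` diagonal blocks `D 1, …, D N`. -/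
def blockDiag' {N d : ℕ} (D : Fin N → Matrix (Fin d) (Fin d) ℝ) :
    Matrix (Fin N × Fin d) (Fin N × Fin d) ℝ :=
  fun p q => if p.1 = q.1 then D p.1 p.2 q.2 else 0

/-- Matrix-weighted in-degree `Σ_{k∈N_i}|A_{ik}|` of vertex `i`
(weights `A i k = 0` contribute nothing). -/
noncomputable def inDeg {N d : ℕ} (A : Fin N → Fin N → Matrix (Fin d) (Fin d) ℝ)
    (i : Fin N) : Matrix (Fin d) (Fin d) ℝ :=
  ∑ k ∈ Finset.univ.erase i, absM (A i k)

/-- Matrix-weighted out-degree `Σ_{k∈N'_i}|A_{ki}|` of vertex `i`. -/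
noncomputable def outDeg {N d : ℕ} (A : Fin N → Fin N → Matrix (Fin d) (Fin d) ℝ)
    (i : Fin N) : Matrix (Fin d) (Fin d) ℝ :=
  ∑ k ∈ Finset.univ.erase i, absM (A k i)

/-- A positive–negative path from `i` to `j`: a sequence `i = p 0, …, p m = j` with
`m ≥ 1` in which every traversed weight `A_{p(s+1), p(s)}` is positive or negative
definite. -/
def PNPath {N d : ℕ} (A : Fin N → Fin N → Matrix (Fin d) (Fin d) ℝ) (i j : Fin N) : Prop :=
  ∃ m : ℕ, 0 < m ∧ ∃ p : Fin (m + 1) → Fin N, p 0 = i ∧ p (Fin.last m) = j ∧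
    ∀ s : Fin m, (A (p s.succ) (p s.castSucc)).PosDef ∨ (-(A (p s.succ) (p s.castSucc))).PosDef

/-- Vertex `j` is in-degree-dominated. -/
def InDegDom {N d : ℕ} (A : Fin N → Fin N → Matrix (Fin d) (Fin d) ℝ) (j : Fin N) : Prop :=
  (inDeg A j - outDeg A j).PosSemidef

/-- Assumption 1: `{1,…,N} = V1 ∪ V2` disjointly, every `j ∈ V2` is reached from some
`i ∈ V1` by a positive–negative path, and every `j ∈ V2` is in-degree-dominated. -/
def Assumption1 {N d : ℕ} (A : Fin N → Fin N → Matrix (Fin d) (Fin d) ℝ)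
    (V1 V2 : Finset (Fin N)) : Prop :=
  V1 ∪ V2 = Finset.univ ∧ V1 ∩ V2 = ∅ ∧
    (∀ j ∈ V2, ∃ i ∈ V1, PNPath A i j) ∧ (∀ j ∈ V2, InDegDom A j)

/-- `Ω_i`: the set of (other) vertices `j` with `A_{ij}` negative semidefinite and nonzero. -/
noncomputable def OmegaSet {N d : ℕ} (A : Fin N → Fin N → Matrix (Fin d) (Fin d) ℝ)
    (i : Fin N) : Finset (Fin N) :=
  (Finset.univ.erase i).filter fun j => (-(A i j)).PosSemidef ∧ A i j ≠ 0


section AuxStmt15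
open Polynomial
variable {d : ℕ}

lemma quad_pos' {M : Matrix (Fin d) (Fin d) ℝ} (hM : M.PosDef) {v : Fin d → ℝ} (hv : v ≠ 0) :
    0 < v ⬝ᵥ M *ᵥ v := by simpa using hM.dotProduct_mulVec_pos hv

lemma quad_conj (M P : Matrix (Fin d) (Fin d) ℝ) (x : Fin d → ℝ) :
    x ⬝ᵥ (P * M * Pᵀ) *ᵥ x = (Pᵀ *ᵥ x) ⬝ᵥ M *ᵥ (Pᵀ *ᵥ x) := by
  rw [mul_assoc, ← Matrix.mulVec_mulVec, Matrix.dotProduct_mulVec, ← Matrix.mulVec_transpose,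
    ← Matrix.mulVec_mulVec]

lemma posDef_conj {M P : Matrix (Fin d) (Fin d) ℝ} (hM : M.PosDef) (hP : P.det ≠ 0) :
    (P * M * Pᵀ).PosDef := by
  have hMt : Mᵀ = M := by
    have := hM.isHermitian.eq
    rwa [← Matrix.conjTranspose_eq_transpose_of_trivial]
  rw [Matrix.posDef_iff_dotProduct_mulVec]
  constructor
  · show (P * M * Pᵀ)ᴴ = _
    rw [Matrix.conjTranspose_eq_transpose_of_trivial]
    simp [Matrix.transpose_mul, hMt, Matrix.mul_assoc]
  · intro x hx
    have hy : Pᵀ *ᵥ x ≠ 0 := by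
      intro h0
      apply hx
      refine Matrix.eq_zero_of_mulVec_eq_zero ?_ h0
      simpa [Matrix.det_transpose] using hP
    calc (0:ℝ) < (Pᵀ *ᵥ x) ⬝ᵥ M *ᵥ (Pᵀ *ᵥ x) := quad_pos' hM hy
    _ = x ⬝ᵥ (P * M * Pᵀ) *ᵥ x := (quad_conj M P x).symm
    _ = star x ⬝ᵥ (P * M * Pᵀ) *ᵥ x := by simp

lemma smul_one_sub_posDef {T : Matrix (Fin d) (Fin d) ℝ} (hT : T.IsHermitian) (c : ℝ)
    (h : ∀ i, hT.eigenvalues i < c) : (c • (1 : Matrix (Fin d) (Fin d) ℝ) - T).PosDef := by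
  set U : Matrix (Fin d) (Fin d) ℝ := (hT.eigenvectorUnitary : Matrix (Fin d) (Fin d) ℝ)
    with hUdef
  have h1 : U * star U = 1 := (Matrix.mem_unitaryGroup_iff).mp hT.eigenvectorUnitary.2
  have key : c • (1 : Matrix (Fin d) (Fin d) ℝ) - T
      = U * Matrix.diagonal (fun i => c - hT.eigenvalues i) * star U := by
    conv_lhs => rw [hT.spectral_theorem, Unitary.conjStarAlgAut_apply, ← hUdef]
    have h2 : c • (1 : Matrix (Fin d) (Fin d) ℝ) = U * (c • 1) * star U := by
      rw [Matrix.mul_smul, Matrix.smul_mul, mul_one, h1]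
    rw [h2, ← Matrix.sub_mul, ← Matrix.mul_sub]
    congr 2
    rw [Matrix.smul_one_eq_diagonal, ← Matrix.diagonal_sub]
    congr 1
  have hdetU : U.det ≠ 0 := by
    intro h0
    have := congrArg Matrix.det h1
    rw [Matrix.det_mul, h0, zero_mul, Matrix.det_one] at this
    exact zero_ne_one this
  have hdiag : (Matrix.diagonal (fun i => c - hT.eigenvalues i)).PosDef :=
    Matrix.posDef_diagonal_iff.mpr fun i => sub_pos.mpr (h i)
  rw [key, show star U = Uᵀ from Matrix.conjTranspose_eq_transpose_of_trivial U]
  exact posDef_conj hdiag hdetU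

lemma charpoly_eval' (M : Matrix (Fin d) (Fin d) ℝ) (μ : ℝ) :
    M.charpoly.eval μ = (μ • (1 : Matrix (Fin d) (Fin d) ℝ) - M).det := by
  rw [Matrix.charpoly, ← Polynomial.coe_evalRingHom, RingHom.map_det]
  congr 1
  ext i j
  by_cases h : i = j
  · subst h
    simp [charmatrix_apply_eq, Matrix.one_apply, Matrix.smul_apply]
  · simp [charmatrix_apply_ne _ _ _ h, Matrix.one_apply_ne h, Matrix.smul_apply, h]

lemma isRoot_of_eigen {M : Matrix (Fin d) (Fin d) ℝ} {μ : ℝ} {w : Fin d → ℝ} (hw : w ≠ 0)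
    (h : M *ᵥ w = μ • w) : M.charpoly.IsRoot μ := by
  have hker : (μ • (1 : Matrix (Fin d) (Fin d) ℝ) - M) *ᵥ w = 0 := by
    rw [sub_mulVec, smul_mulVec, one_mulVec, h, sub_self]
  have hdet : (μ • (1 : Matrix (Fin d) (Fin d) ℝ) - M).det = 0 := by
    by_contra hne
    exact hw (Matrix.eq_zero_of_mulVec_eq_zero hne hker)
  rw [Polynomial.IsRoot, charpoly_eval', hdet]


open scoped MatrixOrder in
lemma evalPD {Bm S : Matrix (Fin d) (Fin d) ℝ} (hB : Bm.PosDef) (hS : S.IsSymm) (c : ℝ)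
    (h : ∀ μ : ℝ, ((Bm⁻¹ * S).charpoly).IsRoot μ → μ < c) : (c • Bm - S).PosDef := by
  have hBpsd := hB.posSemidef
  set C : Matrix (Fin d) (Fin d) ℝ := CFC.sqrt Bm with hCdef
  have hCC : C * C = Bm := CFC.sqrt_mul_sqrt_self Bm hBpsd.nonneg
  have hCt : Cᵀ = C := by
    have := (CFC.sqrt_nonneg Bm).posSemidef.1.eq
    rwa [← Matrix.conjTranspose_eq_transpose_of_trivial]
  have hdetC : C.det ≠ 0 := by
    intro h0
    have := congrArg Matrix.det hCC
    rw [Matrix.det_mul, h0, zero_mul] at this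
    exact hB.det_pos.ne' this.symm
  have hunit : IsUnit C.det := isUnit_iff_ne_zero.mpr hdetC
  have hCi : C * C⁻¹ = 1 := Matrix.mul_nonsing_inv C hunit
  have hCi' : C⁻¹ * C = 1 := Matrix.nonsing_inv_mul C hunit
  have hCit : (C⁻¹)ᵀ = C⁻¹ := by rw [Matrix.transpose_nonsing_inv, hCt]
  set T : Matrix (Fin d) (Fin d) ℝ := C⁻¹ * S * C⁻¹ with hTdef
  have hT : T.IsHermitian := by
    rw [Matrix.IsHermitian, Matrix.conjTranspose_eq_transpose_of_trivial, hTdef,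
      Matrix.transpose_mul, Matrix.transpose_mul, hCit, hS.eq, Matrix.mul_assoc]
  have hBminv : Bm⁻¹ = C⁻¹ * C⁻¹ := by rw [← hCC, Matrix.mul_inv_rev]
  have heig : ∀ i, hT.eigenvalues i < c := by
    intro i
    set v : Fin d → ℝ := ⇑(hT.eigenvectorBasis i) with hvdef
    have hv : T *ᵥ v = hT.eigenvalues i • v := hT.mulVec_eigenvectorBasis i
    have hvne : v ≠ 0 := by
      intro h0
      have hb0 : hT.eigenvectorBasis i = 0 := by
        ext a
        exact congrFun h0 a
      have := hT.eigenvectorBasis.orthonormal.1 i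
      rw [hb0, norm_zero] at this
      exact zero_ne_one this
    set w : Fin d → ℝ := C⁻¹ *ᵥ v with hwdef
    have hwne : w ≠ 0 := by
      intro h0
      apply hvne
      have : (C * C⁻¹) *ᵥ v = C *ᵥ w := by rw [← Matrix.mulVec_mulVec]
      rw [hCi, Matrix.one_mulVec, h0, Matrix.mulVec_zero] at this
      exact this
    have heq : (Bm⁻¹ * S) *ᵥ w = hT.eigenvalues i • w := by
      rw [hwdef, Matrix.mulVec_mulVec, hBminv, ← Matrix.mulVec_smul]
      rw [show C⁻¹ * C⁻¹ * S * C⁻¹ = C⁻¹ * T by rw [hTdef]; simp [Matrix.mul_assoc]]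
      rw [← Matrix.mulVec_mulVec, hv]
    exact h _ (isRoot_of_eigen hwne heq)
  have hMain := smul_one_sub_posDef hT c heig
  have key : c • Bm - S = C * (c • (1 : Matrix (Fin d) (Fin d) ℝ) - T) * Cᵀ := by
    rw [hCt, Matrix.mul_sub, Matrix.sub_mul]
    congr 1
    · rw [Matrix.mul_smul, Matrix.smul_mul, mul_one, hCC]
    · rw [hTdef]
      rw [show C * (C⁻¹ * S * C⁻¹) * C = (C * C⁻¹) * S * (C⁻¹ * C) by simp [Matrix.mul_assoc]]
      rw [hCi, hCi', one_mul, mul_one]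
  rw [key]
  exact posDef_conj hMain hdetC

end AuxStmt15

def blk {N d : ℕ} (x : Fin N × Fin d → ℝ) (i : Fin N) : Fin d → ℝ := fun a => x (i, a)

lemma dot_blocks {N d : ℕ} (x y : Fin N × Fin d → ℝ) :
    x ⬝ᵥ y = ∑ i : Fin N, blk x i ⬝ᵥ blk y i := by
  simp [dotProduct, Fintype.sum_prod_type, blk]

lemma lap_mulVec {N d : ℕ} (A : Fin N → Fin N → Matrix (Fin d) (Fin d) ℝ)
    (x : Fin N × Fin d → ℝ) (i : Fin N) (a : Fin d) :
    ((Lap A) *ᵥ x) (i, a) = (inDeg A i *ᵥ blk x i) a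
      - ∑ j ∈ Finset.univ.erase i, (A i j *ᵥ blk x j) a := by
  simp only [mulVec, dotProduct, Fintype.sum_prod_type]
  rw [← Finset.add_sum_erase _ _ (Finset.mem_univ i)]
  congr 1
  · simp [Lap, inDeg, blk, mulVec, dotProduct]
  · rw [← Finset.sum_neg_distrib]
    refine Finset.sum_congr rfl fun j hj => ?_
    have hji : j ≠ i := Finset.ne_of_mem_erase hj
    simp [Lap, (Ne.symm hji : ¬ i = j), blk, mulVec, dotProduct, Finset.sum_neg_distrib]

lemma blockDiag'_mulVec {N d : ℕ} (D : Fin N → Matrix (Fin d) (Fin d) ℝ)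
    (x : Fin N × Fin d → ℝ) (i : Fin N) (a : Fin d) :
    ((blockDiag' D) *ᵥ x) (i, a) = (D i *ᵥ blk x i) a := by
  simp only [mulVec, dotProduct, Fintype.sum_prod_type]
  rw [Finset.sum_eq_single i]
  · simp [_root_.blockDiag', blk, mulVec, dotProduct]
  · intro j _ hj
    simp [_root_.blockDiag', (Ne.symm hj : ¬ i = j)]
  · simp

lemma sum_mulVec' {d : ℕ} {ι : Type*} (s : Finset ι) (M : ι → Matrix (Fin d) (Fin d) ℝ)
    (v : Fin d → ℝ) : (∑ i ∈ s, M i) *ᵥ v = ∑ i ∈ s, M i *ᵥ v := by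
  ext a
  simp only [mulVec, dotProduct, Matrix.sum_apply, Finset.sum_apply, Finset.sum_mul]
  rw [Finset.sum_comm]

lemma dot_sum' {d : ℕ} {ι : Type*} (s : Finset ι) (v : Fin d → ℝ) (w : ι → Fin d → ℝ) :
    v ⬝ᵥ (∑ i ∈ s, w i) = ∑ i ∈ s, v ⬝ᵥ w i := by
  simp only [dotProduct, Finset.sum_apply, Finset.mul_sum]
  rw [Finset.sum_comm]

lemma erase_swap {N : ℕ} (f : Fin N → Fin N → ℝ) :
    ∑ i : Fin N, ∑ j ∈ Finset.univ.erase i, f i j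
      = ∑ j : Fin N, ∑ i ∈ Finset.univ.erase j, f i j := by
  rw [Finset.sum_comm']
  intro i j
  simp [Finset.mem_erase, and_comm, eq_comm]

lemma quad_LB {N d : ℕ} (A : Fin N → Fin N → Matrix (Fin d) (Fin d) ℝ)
    (D : Fin N → Matrix (Fin d) (Fin d) ℝ) (x : Fin N × Fin d → ℝ) :
    x ⬝ᵥ (Lap A + blockDiag' D) *ᵥ x
      = ∑ i : Fin N, (blk x i ⬝ᵥ (inDeg A i *ᵥ blk x i) + blk x i ⬝ᵥ (D i *ᵥ blk x i))
        - ∑ i : Fin N, ∑ j ∈ Finset.univ.erase i, blk x i ⬝ᵥ (A i j *ᵥ blk x j) := by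
  rw [dot_blocks]
  rw [← Finset.sum_sub_distrib]
  refine Finset.sum_congr rfl fun i _ => ?_
  have hblk : blk ((Lap A + blockDiag' D) *ᵥ x) i
      = fun a => (inDeg A i *ᵥ blk x i) a - ∑ j ∈ Finset.univ.erase i, (A i j *ᵥ blk x j) a
          + (D i *ᵥ blk x i) a := by
    funext a
    have := lap_mulVec A x i a
    have h2 := blockDiag'_mulVec D x i a
    show ((Lap A + blockDiag' D) *ᵥ x) (i, a) = _
    rw [Matrix.add_mulVec]
    show ((Lap A) *ᵥ x) (i,a) + ((_root_.blockDiag' D) *ᵥ x) (i,a) = _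
    rw [this, h2]
  rw [hblk]
  rw [show (fun a => (inDeg A i *ᵥ blk x i) a - ∑ j ∈ Finset.univ.erase i, (A i j *ᵥ blk x j) a
          + (D i *ᵥ blk x i) a)
      = (inDeg A i *ᵥ blk x i) - (∑ j ∈ Finset.univ.erase i, (A i j *ᵥ blk x j))
          + (D i *ᵥ blk x i) from by funext a; simp [Finset.sum_apply]]
  rw [dotProduct_add, dotProduct_sub, dot_sum']
  ring

lemma inDeg_expand {N d : ℕ} (A : Fin N → Fin N → Matrix (Fin d) (Fin d) ℝ)
    (x : Fin N × Fin d → ℝ) (i : Fin N) :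
    blk x i ⬝ᵥ (inDeg A i *ᵥ blk x i)
      = ∑ j ∈ Finset.univ.erase i, blk x i ⬝ᵥ (absM (A i j) *ᵥ blk x i) := by
  rw [inDeg, sum_mulVec', dot_sum']

lemma outDeg_swap {N d : ℕ} (A : Fin N → Fin N → Matrix (Fin d) (Fin d) ℝ)
    (x : Fin N × Fin d → ℝ) :
    ∑ i : Fin N, blk x i ⬝ᵥ (outDeg A i *ᵥ blk x i)
      = ∑ i : Fin N, ∑ j ∈ Finset.univ.erase i, blk x j ⬝ᵥ (absM (A i j) *ᵥ blk x j) := by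
  have e1 : ∀ i : Fin N, blk x i ⬝ᵥ (outDeg A i *ᵥ blk x i)
      = ∑ k ∈ Finset.univ.erase i, blk x i ⬝ᵥ (absM (A k i) *ᵥ blk x i) := fun i => by
    rw [outDeg, sum_mulVec', dot_sum']
  simp only [e1]
  exact erase_swap (fun i k => blk x i ⬝ᵥ (absM (A k i) *ᵥ blk x i))

lemma sym_identity {N d : ℕ} (A : Fin N → Fin N → Matrix (Fin d) (Fin d) ℝ)
    (δi : Fin N → ℝ) (B : Fin N → Matrix (Fin d) (Fin d) ℝ) (x : Fin N × Fin d → ℝ) :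
    2 * (x ⬝ᵥ (Lap A + blockDiag' fun i => δi i • B i) *ᵥ x)
      = (∑ i : Fin N, ∑ j ∈ Finset.univ.erase i,
          (blk x i ⬝ᵥ (absM (A i j) *ᵥ blk x i) + blk x j ⬝ᵥ (absM (A i j) *ᵥ blk x j)
            - 2 * (blk x i ⬝ᵥ (A i j *ᵥ blk x j))))
        + ∑ i : Fin N, (blk x i ⬝ᵥ ((inDeg A i - outDeg A i) *ᵥ blk x i)
            + (2 * δi i) * (blk x i ⬝ᵥ (B i *ᵥ blk x i))) := by
  rw [quad_LB]
  have e1 : ∀ i, blk x i ⬝ᵥ ((δi i • B i) *ᵥ blk x i)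
      = δi i * (blk x i ⬝ᵥ (B i *ᵥ blk x i)) := fun i => by
    rw [smul_mulVec, dotProduct_smul, smul_eq_mul]
  have e2 : ∀ i, blk x i ⬝ᵥ ((inDeg A i - outDeg A i) *ᵥ blk x i)
      = blk x i ⬝ᵥ (inDeg A i *ᵥ blk x i) - blk x i ⬝ᵥ (outDeg A i *ᵥ blk x i) := fun i => by
    rw [sub_mulVec, dotProduct_sub]
  simp only [e1, e2, mul_assoc, Finset.sum_add_distrib, Finset.sum_sub_distrib, ← Finset.mul_sum]
  rw [← Finset.sum_congr rfl (fun i _ => inDeg_expand A x i), ← outDeg_swap A x]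
  ring

lemma quad_nonneg' {d : ℕ} {M : Matrix (Fin d) (Fin d) ℝ} (hM : M.PosSemidef) (v : Fin d → ℝ) :
    0 ≤ v ⬝ᵥ M *ᵥ v := by simpa using hM.dotProduct_mulVec_nonneg v

lemma quad_zero_of_posDef {d : ℕ} {M : Matrix (Fin d) (Fin d) ℝ} (hM : M.PosDef) {v : Fin d → ℝ}
    (h : v ⬝ᵥ M *ᵥ v = 0) : v = 0 := by
  by_contra hv
  exact (quad_pos' hM hv).ne' h

lemma dot_mulVec_symm {d : ℕ} {M : Matrix (Fin d) (Fin d) ℝ} (hM : M.IsSymm) (v w : Fin d → ℝ) :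
    v ⬝ᵥ M *ᵥ w = w ⬝ᵥ M *ᵥ v := by
  rw [Matrix.dotProduct_mulVec, ← Matrix.mulVec_transpose, hM.eq, dotProduct_comm]

lemma quad_expand_sub {d : ℕ} {M : Matrix (Fin d) (Fin d) ℝ} (hM : M.IsSymm) (v w : Fin d → ℝ) :
    (v - w) ⬝ᵥ M *ᵥ (v - w) = v ⬝ᵥ M *ᵥ v + w ⬝ᵥ M *ᵥ w - 2 * (v ⬝ᵥ M *ᵥ w) := by
  rw [Matrix.mulVec_sub, dotProduct_sub, sub_dotProduct, sub_dotProduct,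
    dot_mulVec_symm hM w v]
  ring

lemma quad_expand_add {d : ℕ} {M : Matrix (Fin d) (Fin d) ℝ} (hM : M.IsSymm) (v w : Fin d → ℝ) :
    (v + w) ⬝ᵥ M *ᵥ (v + w) = v ⬝ᵥ M *ᵥ v + w ⬝ᵥ M *ᵥ w + 2 * (v ⬝ᵥ M *ᵥ w) := by
  rw [Matrix.mulVec_add, dotProduct_add, add_dotProduct, add_dotProduct,
    dot_mulVec_symm hM w v]
  ring

lemma psd_nsd_zero {d : ℕ} {M : Matrix (Fin d) (Fin d) ℝ} (h1 : M.PosSemidef)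
    (h2 : (-M).PosSemidef) : M = 0 := by
  have hv : ∀ v : Fin d → ℝ, M *ᵥ v = 0 := by
    intro v
    have h3 : v ⬝ᵥ M *ᵥ v = 0 := by
      have a1 := quad_nonneg' h1 v
      have a2 := quad_nonneg' h2 v
      rw [Matrix.neg_mulVec, dotProduct_neg] at a2
      linarith
    have := (h1.dotProduct_mulVec_zero_iff v).mp (by simpa using h3)
    exact this
  ext i j
  have := congrFun (hv (Pi.single j 1)) i
  simpa [Matrix.mulVec_single] using this

lemma absM_psd {d : ℕ} {M : Matrix (Fin d) (Fin d) ℝ} (h : M.PosSemidef ∨ (-M).PosSemidef) :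
    (absM M).PosSemidef := by
  unfold absM
  split
  · assumption
  · next hn => exact h.resolve_left hn

lemma absM_symm {d : ℕ} {M : Matrix (Fin d) (Fin d) ℝ} (h : M.PosSemidef ∨ (-M).PosSemidef) :
    (absM M).IsSymm := by
  have := (absM_psd h).1
  rwa [Matrix.IsSymm, ← Matrix.conjTranspose_eq_transpose_of_trivial]

lemma exists_ne_zero_vec {d : ℕ} (hd : 1 ≤ d) : ∃ v : Fin d → ℝ, v ≠ 0 := by
  refine ⟨Pi.single ⟨0, hd⟩ 1, ?_⟩
  intro h
  have := congrFun h ⟨0, hd⟩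
  simp at this

lemma absM_posDef {d : ℕ} (hd : 1 ≤ d) {M : Matrix (Fin d) (Fin d) ℝ}
    (h : M.PosDef ∨ (-M).PosDef) : (absM M).PosDef := by
  obtain ⟨v, hv⟩ := exists_ne_zero_vec (d := d) hd
  rcases h with h | h
  · rwa [absM, if_pos h.posSemidef]
  · rw [absM, if_neg]
    · exact h
    · intro hp
      have a1 := quad_nonneg' hp v
      have a2 := quad_pos' h hv
      rw [Matrix.neg_mulVec, dotProduct_neg] at a2
      linarith

lemma absM_zero {d : ℕ} : absM (0 : Matrix (Fin d) (Fin d) ℝ) = 0 := by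
  rw [absM, if_pos]
  exact Matrix.PosSemidef.zero

lemma two_B {N d : ℕ} {A : Fin N → Fin N → Matrix (Fin d) (Fin d) ℝ} (hA : SignedWeights A)
    (i : Fin N) :
    inDeg A i - (∑ j ∈ Finset.univ.erase i, A i j)
      = (2:ℝ) • ∑ j ∈ OmegaSet A i, absM (A i j) := by
  rw [inDeg, ← Finset.sum_sub_distrib, Finset.smul_sum]
  rw [← Finset.sum_subset (Finset.filter_subset _ _ : OmegaSet A i ⊆ Finset.univ.erase i)]
  · refine Finset.sum_congr rfl fun j hj => ?_
    obtain ⟨-, hnsd, hne⟩ := Finset.mem_filter.mp hj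
    have hnpsd : ¬ (A i j).PosSemidef := fun hpsd => hne (psd_nsd_zero hpsd hnsd)
    rw [absM, if_neg hnpsd, two_smul]
    abel
  · intro j hj hnj
    by_cases h0 : A i j = 0
    · rw [h0, absM_zero, sub_zero]
    · have hnsd : ¬ (-(A i j)).PosSemidef := by
        intro hnsd
        exact hnj (Finset.mem_filter.mpr ⟨hj, hnsd, h0⟩)
      have hpsd : (A i j).PosSemidef :=
        ((hA i j (fun h => (Finset.mem_erase.mp hj).1 h.symm)).2).resolve_right hnsd
      rw [absM, if_pos hpsd, sub_self]

lemma LB_const {N d : ℕ} {A : Fin N → Fin N → Matrix (Fin d) (Fin d) ℝ} (hA : SignedWeights A)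
    {δ : ℝ} (hδ : 0 < δ) {δi : Fin N → ℝ}
    (hδi : ∀ i, δi i = if (OmegaSet A i).Nonempty then δ else 0)
    {B : Fin N → Matrix (Fin d) (Fin d) ℝ}
    (hB : ∀ i, B i = ∑ j ∈ OmegaSet A i, absM (A i j)) (θ' : Fin d → ℝ) :
    (Lap A + blockDiag' fun i => δi i • B i) *ᵥ (fun p => θ' p.2)
      = fun p => ((δi p.1 • B p.1) *ᵥ ((1 + 2/δ) • θ')) p.2 := by
  funext p
  obtain ⟨i, a⟩ := p
  have hblk : ∀ j : Fin N, blk (fun p : Fin N × Fin d => θ' p.2) j = θ' := fun j => rfl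
  have step1 : ((Lap A + blockDiag' fun i => δi i • B i) *ᵥ (fun p => θ' p.2)) (i, a)
      = (inDeg A i *ᵥ θ') a - ∑ j ∈ Finset.univ.erase i, (A i j *ᵥ θ') a
        + ((δi i • B i) *ᵥ θ') a := by
    rw [Matrix.add_mulVec]
    show ((Lap A) *ᵥ _) (i,a) + ((_root_.blockDiag' _) *ᵥ _) (i,a) = _
    rw [lap_mulVec, blockDiag'_mulVec, hblk]
    simp only [hblk]
  rw [step1]
  have step2 : (inDeg A i *ᵥ θ') a - ∑ j ∈ Finset.univ.erase i, (A i j *ᵥ θ') a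
      = (((2:ℝ) • B i) *ᵥ θ') a := by
    rw [hB i, ← two_B hA i, Matrix.sub_mulVec, sum_mulVec']
    simp [Finset.sum_apply]
  rw [step2]
  rw [Matrix.smul_mulVec, Matrix.smul_mulVec, Matrix.mulVec_smul]
  simp only [Matrix.smul_mulVec, Pi.smul_apply, smul_eq_mul]
  by_cases hΩ : (OmegaSet A i).Nonempty
  · rw [hδi i, if_pos hΩ]
    field_simp
    ring
  · have hB0 : B i = 0 := by
      rw [hB i, Finset.not_nonempty_iff_eq_empty.mp hΩ, Finset.sum_empty]
    rw [hδi i, if_neg hΩ, hB0]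
    simp

lemma inDeg_symm {N d : ℕ} {A : Fin N → Fin N → Matrix (Fin d) (Fin d) ℝ} (hA : SignedWeights A)
    (i : Fin N) : (inDeg A i).IsSymm := by
  rw [Matrix.IsSymm, inDeg, Matrix.transpose_sum]
  refine Finset.sum_congr rfl fun k hk => ?_
  exact absM_symm (hA i k fun h => (Finset.mem_erase.mp hk).1 h.symm).2

lemma outDeg_symm {N d : ℕ} {A : Fin N → Fin N → Matrix (Fin d) (Fin d) ℝ} (hA : SignedWeights A)
    (i : Fin N) : (outDeg A i).IsSymm := by
  rw [Matrix.IsSymm, outDeg, Matrix.transpose_sum]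
  refine Finset.sum_congr rfl fun k hk => ?_
  exact absM_symm (hA k i fun h => (Finset.mem_erase.mp hk).1 h).2

lemma key {N d : ℕ} (hd : 1 ≤ d) {A : Fin N → Fin N → Matrix (Fin d) (Fin d) ℝ}
    (hA : SignedWeights A) {V1 V2 : Finset (Fin N)} (hAss : Assumption1 A V1 V2)
    (hPD : ∀ i ∈ V1, (∑ j ∈ OmegaSet A i, absM (A i j)).PosDef)
    {δ : ℝ} (hδ : 0 < δ)
    (hδC : ∀ i ∈ V1, ∀ μ : ℝ,
      (((∑ j ∈ OmegaSet A i, absM (A i j))⁻¹ *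
        (outDeg A i - inDeg A i)).charpoly).IsRoot μ → μ / 2 < δ)
    {δi : Fin N → ℝ} (hδi : ∀ i, δi i = if (OmegaSet A i).Nonempty then δ else 0)
    {B : Fin N → Matrix (Fin d) (Fin d) ℝ}
    (hB : ∀ i, B i = ∑ j ∈ OmegaSet A i, absM (A i j))
    (x : Fin N × Fin d → ℝ)
    (hx : (Lap A + blockDiag' fun i => δi i • B i) *ᵥ x = 0) : x = 0 := by
  obtain ⟨hUnion, hDisj, hPath, hDom⟩ := hAss
  have hV2 : ∀ j : Fin N, j ∉ V1 → j ∈ V2 := by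
    intro j hj
    have : j ∈ V1 ∪ V2 := by rw [hUnion]; exact Finset.mem_univ j
    exact (Finset.mem_union.mp this).resolve_left hj
  have hBpsd : ∀ i, (B i).PosSemidef := by
    intro i
    rw [hB i]
    refine Finset.sum_induction _ _ (fun a b ha hb => ha.add hb) Matrix.PosSemidef.zero ?_
    intro j hj
    have hji : j ≠ i := (Finset.mem_erase.mp (Finset.mem_filter.mp hj).1).1
    exact absM_psd (hA i j (Ne.symm hji)).2
  have hδinn : ∀ i, 0 ≤ δi i := by
    intro i
    rw [hδi i]
    split
    · exact hδ.le
    · exact le_refl 0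
  have hΩne : ∀ i ∈ V1, (OmegaSet A i).Nonempty := by
    intro i hi
    by_contra hn
    have h0 := hPD i hi
    rw [Finset.not_nonempty_iff_eq_empty.mp hn, Finset.sum_empty] at h0
    obtain ⟨v, hv⟩ := exists_ne_zero_vec (d := d) hd
    have := quad_pos' h0 hv
    simp at this
  have hδiV1 : ∀ i ∈ V1, δi i = δ := fun i hi => by rw [hδi i, if_pos (hΩne i hi)]
  have hMi : ∀ i ∈ V1, (inDeg A i - outDeg A i + (2 * δi i) • B i).PosDef := by
    intro i hi
    have hBiPD : (B i).PosDef := by rw [hB i]; exact hPD i hi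
    have hS : (outDeg A i - inDeg A i).IsSymm := (outDeg_symm hA i).sub (inDeg_symm hA i)
    have hroots : ∀ μ : ℝ, (((B i)⁻¹ * (outDeg A i - inDeg A i)).charpoly).IsRoot μ
        → μ < 2 * δ := by
      intro μ hμ
      rw [hB i] at hμ
      have := hδC i hi μ hμ
      linarith
    have := evalPD hBiPD hS (2 * δ) hroots
    rw [hδiV1 i hi]
    have heq : (2 * δ) • B i - (outDeg A i - inDeg A i)
        = inDeg A i - outDeg A i + (2 * δ) • B i := by abel
    rwa [heq] at this
  have hq0 : x ⬝ᵥ (Lap A + blockDiag' fun i => δi i • B i) *ᵥ x = 0 := by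
    rw [hx, dotProduct_zero]
  have hiden := sym_identity A δi B x
  rw [hq0, mul_zero] at hiden
  set Qf : Fin N → Fin N → ℝ := fun i j =>
    blk x i ⬝ᵥ (absM (A i j) *ᵥ blk x i) + blk x j ⬝ᵥ (absM (A i j) *ᵥ blk x j)
      - 2 * (blk x i ⬝ᵥ (A i j *ᵥ blk x j)) with hQf
  set Df : Fin N → ℝ := fun i =>
    blk x i ⬝ᵥ ((inDeg A i - outDeg A i) *ᵥ blk x i)
      + (2 * δi i) * (blk x i ⬝ᵥ (B i *ᵥ blk x i)) with hDf
  have hQnn : ∀ i : Fin N, ∀ j ∈ Finset.univ.erase i, 0 ≤ Qf i j := by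
    intro i j hj
    have hij : i ≠ j := fun h => (Finset.mem_erase.mp hj).1 h.symm
    have hsym := (hA i j hij).1
    by_cases hpsd : (A i j).PosSemidef
    · have habs : absM (A i j) = A i j := by rw [absM, if_pos hpsd]
      have := quad_nonneg' hpsd (blk x i - blk x j)
      rw [quad_expand_sub hsym] at this
      rw [hQf]
      simpa [habs] using this
    · have hnsd : (-(A i j)).PosSemidef := ((hA i j hij).2).resolve_left hpsd
      have habs : absM (A i j) = -(A i j) := by rw [absM, if_neg hpsd]
      have := quad_nonneg' hnsd (blk x i + blk x j)
      rw [quad_expand_add hsym.neg] at this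
      simp only [Matrix.neg_mulVec, dotProduct_neg] at this
      rw [hQf]
      simp only [habs, Matrix.neg_mulVec, dotProduct_neg]
      linarith [this]
  have hDnn : ∀ i : Fin N, 0 ≤ Df i := by
    intro i
    by_cases hi : i ∈ V1
    · have hpd := hMi i hi
      have : Df i = blk x i ⬝ᵥ ((inDeg A i - outDeg A i + (2 * δi i) • B i) *ᵥ blk x i) := by
        rw [hDf, Matrix.add_mulVec, dotProduct_add, Matrix.smul_mulVec,
          dotProduct_smul, smul_eq_mul]
      rw [this]
      exact quad_nonneg' hpd.posSemidef _
    · have hdom := hDom i (hV2 i hi)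
      have h1 : 0 ≤ blk x i ⬝ᵥ ((inDeg A i - outDeg A i) *ᵥ blk x i) := quad_nonneg' hdom _
      have h2 : 0 ≤ blk x i ⬝ᵥ (B i *ᵥ blk x i) := quad_nonneg' (hBpsd i) _
      have h3 : 0 ≤ 2 * δi i := by linarith [hδinn i]
      rw [hDf]
      have := mul_nonneg h3 h2
      simp only
      linarith
  have hS1nn : (0:ℝ) ≤ ∑ i : Fin N, ∑ j ∈ Finset.univ.erase i, Qf i j :=
    Finset.sum_nonneg fun i _ => Finset.sum_nonneg fun j hj => hQnn i j hj
  have hS2nn : (0:ℝ) ≤ ∑ i : Fin N, Df i := Finset.sum_nonneg fun i _ => hDnn i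
  have hS1 : ∑ i : Fin N, ∑ j ∈ Finset.univ.erase i, Qf i j = 0 := by linarith [hiden]
  have hS2 : ∑ i : Fin N, Df i = 0 := by linarith [hiden]
  have hD0 : ∀ i : Fin N, Df i = 0 := by
    intro i
    have := (Finset.sum_eq_zero_iff_of_nonneg (fun i _ => hDnn i)).mp hS2
    exact this i (Finset.mem_univ i)
  have hQ0 : ∀ i : Fin N, ∀ j ∈ Finset.univ.erase i, Qf i j = 0 := by
    have houter := (Finset.sum_eq_zero_iff_of_nonneg
      (fun i _ => Finset.sum_nonneg fun j hj => hQnn i j hj)).mp hS1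
    intro i j hj
    have := (Finset.sum_eq_zero_iff_of_nonneg (fun j hj => hQnn i j hj)).mp
      (houter i (Finset.mem_univ i))
    exact this j hj
  have hV1zero : ∀ i ∈ V1, blk x i = 0 := by
    intro i hi
    have hpd := hMi i hi
    have : blk x i ⬝ᵥ ((inDeg A i - outDeg A i + (2 * δi i) • B i) *ᵥ blk x i) = 0 := by
      rw [Matrix.add_mulVec, dotProduct_add, Matrix.smul_mulVec,
        dotProduct_smul, smul_eq_mul]
      exact hD0 i
    exact quad_zero_of_posDef hpd this
  have hAllzero : ∀ j : Fin N, blk x j = 0 := by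
    intro j
    by_cases hj : j ∈ V1
    · exact hV1zero j hj
    · obtain ⟨i0, hi0, m, hm, p, hp0, hpl, hstep⟩ := hPath j (hV2 j hj)
      have hall : ∀ s : Fin (m + 1), blk x (p s) = 0 := by
        intro s
        induction s using Fin.induction with
        | zero => rw [hp0]; exact hV1zero i0 hi0
        | succ s ih =>
          by_cases hsame : p s.succ = p s.castSucc
          · rw [hsame]; exact ih
          · have hmem : p s.castSucc ∈ Finset.univ.erase (p s.succ) :=
              Finset.mem_erase.mpr ⟨fun h => hsame h.symm, Finset.mem_univ _⟩
            have hQ := hQ0 (p s.succ) (p s.castSucc) hmem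
            have habs : (absM (A (p s.succ) (p s.castSucc))).PosDef := absM_posDef hd (hstep s)
            rw [hQf] at hQ
            simp only [ih, Matrix.mulVec_zero, dotProduct_zero, zero_dotProduct,
              mul_zero, add_zero, sub_zero] at hQ
            exact quad_zero_of_posDef habs hQ
      rw [← hpl]
      exact hall (Fin.last m)
  funext p
  exact congrFun (hAllzero p.1) p.2

/-- null space of the augmented grounded Laplacian under the
design: the solution set of `L_B u = Δ_B w` (i.e. the null space of the augmented
Laplacian `[[L_B, −Δ_B],[0,0]]`) is exactly
`{(1_N ⊗ θ', (1 + 2/δ)θ') : θ' ∈ ℝ^d}`. The bound `δ > max(0, max_{i∈V1} C_i)` is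
expressed by `δ > 0` together with `δ > μ/2` for every (real) eigenvalue `μ` of the
indicated matrices, all of whose eigenvalues are real. -/
theorem stmt15 (N d : ℕ) (hN : 1 ≤ N) (hd : 1 ≤ d)
    (A : Fin N → Fin N → Matrix (Fin d) (Fin d) ℝ) (hA : SignedWeights A)
    (V1 V2 : Finset (Fin N)) (hAss : Assumption1 A V1 V2)
    (hPD : ∀ i ∈ V1, (∑ j ∈ OmegaSet A i, absM (A i j)).PosDef)
    (δ : ℝ) (hδ : 0 < δ)
    (hδC : ∀ i ∈ V1, ∀ μ : ℝ,
      (((∑ j ∈ OmegaSet A i, absM (A i j))⁻¹ *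
        (outDeg A i - inDeg A i)).charpoly).IsRoot μ → μ / 2 < δ)
    (δi : Fin N → ℝ) (hδi : ∀ i, δi i = if (OmegaSet A i).Nonempty then δ else 0)
    (B : Fin N → Matrix (Fin d) (Fin d) ℝ)
    (hB : ∀ i, B i = ∑ j ∈ OmegaSet A i, absM (A i j))
    (LB : Matrix (Fin N × Fin d) (Fin N × Fin d) ℝ)
    (hLB : LB = Lap A + blockDiag' fun i => δi i • B i) :
    {uw : (Fin N × Fin d → ℝ) × (Fin d → ℝ) |
        LB.mulVec uw.1 = fun p => ((δi p.1 • B p.1).mulVec uw.2) p.2} =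
      {uw : (Fin N × Fin d → ℝ) × (Fin d → ℝ) |
        ∃ θ' : Fin d → ℝ, uw.1 = (fun p => θ' p.2) ∧ uw.2 = (1 + 2 / δ) • θ'} := by
  subst hLB
  ext ⟨u, w⟩
  simp only [Set.mem_setOf_eq]
  constructor
  · intro h
    have hδ2 : δ + 2 ≠ 0 := by linarith
    set θ' : Fin d → ℝ := (δ / (δ + 2)) • w with hθ
    have hw : (1 + 2 / δ) • θ' = w := by
      rw [hθ, smul_smul]
      have h1 : (1 + 2 / δ) * (δ / (δ + 2)) = 1 := by field_simp
      rw [h1, one_smul]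
    have hconst := LB_const hA hδ hδi hB θ'
    rw [hw] at hconst
    have hdiff : (Lap A + blockDiag' fun i => δi i • B i) *ᵥ (u - fun p => θ' p.2) = 0 := by
      rw [Matrix.mulVec_sub, h, hconst, sub_self]
    have hzero := key hd hA hAss hPD hδ hδC hδi hB _ hdiff
    exact ⟨θ', sub_eq_zero.mp hzero, hw.symm⟩
  · rintro ⟨θ', hu, hw⟩
    rw [hu, hw]
    exact LB_const hA hδ hδi hB θ'
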